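/- Let ℓ > 0 be a real number, let S be a nonempty finite set with |S| ≥ ℓ/2, and let (x_j)_{j ∈ S} be real numbers with |x_j| ≥ 1 for every j ∈ S. Let (g_j)_{j ∈ S} be independent uniformly random signs in {−1,+1}. Then for every interval I ⊆ ℝ of length at most 1, Pr[ Σ_{j ∈ S} g_j·x_j ∈ I ] ≤ 50/√ℓ. -/

import Mathlib

open Finset
open scoped Classical

lemma cb_sq (m : ℕ) : (Nat.centralBinom m)^2 * (3*m+1) ≤ 16^m := by
  induction m with
  | zero => simp [Nat.centralBinom]
  | succ m ih =>
    have key : (m+1) * Nat.centralBinom (m+1) = 2*(2*m+1) * Nat.centralBinom m :=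
      Nat.succ_mul_centralBinom_succ m
    have hpos : 0 < (m+1)^2 * (3*m+1) := by positivity
    apply Nat.le_of_mul_le_mul_left _ hpos
    calc (m+1)^2*(3*m+1) * ((Nat.centralBinom (m+1))^2 * (3*(m+1)+1))
        = (3*m+1) * (3*m+4) * (((m+1) * Nat.centralBinom (m+1))^2) := by ring
      _ = (3*m+1)*(3*m+4) * ((2*(2*m+1) * Nat.centralBinom m)^2) := by rw [key]
      _ = (3*m+4)*(2*(2*m+1))^2 * ((Nat.centralBinom m)^2 * (3*m+1)) := by ring
      _ ≤ (3*m+4)*(2*(2*m+1))^2 * 16^m := Nat.mul_le_mul_left _ ih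
      _ ≤ ((m+1)^2*(3*m+1)*16) * 16^m := by
          apply Nat.mul_le_mul_right
          nlinarith
      _ = (m+1)^2*(3*m+1) * (16^(m+1)) := by ring

lemma cb_real (m : ℕ) : (Nat.centralBinom m : ℝ) * Real.sqrt (3*m+1) ≤ 4^m := by
  have h : ((Nat.centralBinom m : ℝ))^2 * ((3*m+1 : ℕ) : ℝ) ≤ (16:ℝ)^m := by
    calc ((Nat.centralBinom m : ℝ))^2 * ((3*m+1 : ℕ) : ℝ)
        = (((Nat.centralBinom m)^2 * (3*m+1) : ℕ) : ℝ) := by push_cast; ring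
      _ ≤ ((16^m : ℕ) : ℝ) := by exact_mod_cast cb_sq m
      _ = (16:ℝ)^m := by push_cast; ring
  have h2 : (Nat.centralBinom m : ℝ) * Real.sqrt (3*m+1)
      = Real.sqrt ((Nat.centralBinom m : ℝ)^2 * (3*m+1)) := by
    rw [Real.sqrt_mul (by positivity), Real.sqrt_sq (by positivity)]
  rw [h2]
  have h16 : (16:ℝ)^m = ((4:ℝ)^m)^2 := by
    rw [show (16:ℝ) = 4^2 by norm_num, ← pow_mul, ← pow_mul, Nat.mul_comm]
  have : ((4:ℝ)^m) = Real.sqrt ((16:ℝ)^m) := by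
    rw [h16, Real.sqrt_sq (by positivity)]
  rw [this]
  apply Real.sqrt_le_sqrt
  calc (Nat.centralBinom m : ℝ)^2 * (3*m+1) = ((Nat.centralBinom m : ℝ))^2 * ((3*m+1:ℕ):ℝ) := by
        push_cast; ring
    _ ≤ (16:ℝ)^m := h

-- odd case: choose(2m+1, m) ≤ 2 * centralBinom m
lemma odd_choose (m : ℕ) : (2*m+1).choose m ≤ 2 * Nat.centralBinom m := by
  have hsymm : (2*m+1).choose (m+1) = (2*m+1).choose m := by
    have h := Nat.choose_symm (show m+1 ≤ 2*m+1 by omega)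
    rw [show 2*m+1-(m+1) = m by omega] at h
    exact h.symm
  have hsum : Nat.centralBinom (m+1) = (2*m+1).choose m + (2*m+1).choose (m+1) := by
    rw [Nat.centralBinom]
    have : 2*(m+1) = (2*m+1) + 1 := by omega
    rw [this, Nat.choose_succ_succ]
  have h4 : Nat.centralBinom (m+1) ≤ 4 * Nat.centralBinom m := by
    have key := Nat.succ_mul_centralBinom_succ m
    have : (m+1) * Nat.centralBinom (m+1) ≤ (m+1) * (4 * Nat.centralBinom m) := by
      rw [key]; nlinarith [Nat.centralBinom_pos m]
    exact Nat.le_of_mul_le_mul_left this (by omega)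
  omega

lemma choose_half (n : ℕ) (hn : 1 ≤ n) :
    (n.choose (n/2) : ℝ) * Real.sqrt n ≤ 2^n := by
  rcases Nat.even_or_odd n with ⟨m, hm⟩ | ⟨m, hm⟩
  · subst hm
    have hhalf : (m + m) / 2 = m := by omega
    rw [hhalf]
    have h1 : ((m+m).choose m : ℝ) = (Nat.centralBinom m : ℝ) := by
      rw [Nat.centralBinom]; norm_num [two_mul]
    rw [h1, show ((m+m:ℕ):ℝ) = (m:ℝ)+m by push_cast; ring]
    calc (Nat.centralBinom m : ℝ) * Real.sqrt ((m:ℝ)+m)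
        ≤ (Nat.centralBinom m : ℝ) * Real.sqrt (3*m+1) := by
          apply mul_le_mul_of_nonneg_left _ (by positivity)
          apply Real.sqrt_le_sqrt; push_cast; linarith
      _ ≤ 4^m := cb_real m
      _ = 2^(m+m) := by rw [show (4:ℝ) = 2^2 by norm_num, ← pow_mul]; ring_nf
  · subst hm
    have hhalf : (2*m+1) / 2 = m := by omega
    rw [hhalf, show ((2*m+1:ℕ):ℝ) = 2*(m:ℝ)+1 by push_cast; ring]
    calc ((2*m+1).choose m : ℝ) * Real.sqrt (2*(m:ℝ)+1)
        ≤ (2 * Nat.centralBinom m : ℝ) * Real.sqrt (3*m+1) := by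
          apply mul_le_mul (by exact_mod_cast odd_choose m)
            (Real.sqrt_le_sqrt (by push_cast; linarith)) (by positivity) (by positivity)
      _ = 2 * ((Nat.centralBinom m : ℝ) * Real.sqrt (3*m+1)) := by ring
      _ ≤ 2 * 4^m := by linarith [cb_real m]
      _ = 2^(2*m+1) := by rw [show (4:ℝ) = 2^2 by norm_num, ← pow_mul, pow_succ]; ring

/-- Erdős–Littlewood–Offord-type anti-concentration: for a nonempty finite index set `S`
with `|S| ≥ ℓ/2`, coefficients `|x_j| ≥ 1`, and independent uniform random signs `g`,
the signed sum lands in any interval of length at most `1` with probability at most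
`50/√ℓ`. -/
theorem stmt8 (S : Type*) [Fintype S] [Nonempty S] (ℓ : ℝ) (hℓ : 0 < ℓ)
    (hcard : ℓ / 2 ≤ (Fintype.card S : ℝ)) (x : S → ℝ) (hx : ∀ j, 1 ≤ |x j|)
    (a b : ℝ) (hab : b - a ≤ 1) :
    ((Finset.univ.filter (fun g : S → Bool =>
        (∑ j, (if g j then (1 : ℝ) else -1) * x j) ∈ Set.Icc a b)).card : ℝ) /
      (Fintype.card (S → Bool) : ℝ) ≤ 50 / Real.sqrt ℓ := by
  classical
  set n := Fintype.card S with hn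
  have hn1 : 1 ≤ n := Fintype.card_pos
  set t : (S → Bool) → S → ℝ := fun g j => (if g j then (1 : ℝ) else -1) * x j with ht
  set f : (S → Bool) → Finset S := fun g => univ.filter (fun j => 0 < t g j) with hf
  -- basic facts about t
  have habs : ∀ g j, |t g j| = |x j| := by
    intro g j; by_cases h : g j <;> simp [ht, h, abs_mul]
  have hcases : ∀ g j, t g j = |x j| ∨ t g j = -|x j| := by
    intro g j
    rcases abs_cases (t g j) with ⟨h1, _⟩ | ⟨h1, _⟩
    · left; rw [← habs g j, h1]
    · right; rw [← habs g j]; linarith [h1]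
  have hmem : ∀ g j, j ∈ f g ↔ t g j = |x j| := by
    intro g j
    simp only [hf, mem_filter, mem_univ, true_and]
    constructor
    · intro hpos
      rcases hcases g j with h | h
      · exact h
      · exfalso; have := hx j; rw [h] at hpos; linarith
    · intro h; rw [h]; linarith [hx j]
  have htle : ∀ g j, t g j ≤ |x j| := by
    intro g j; rcases hcases g j with h | h <;> rw [h] <;> linarith [abs_nonneg (x j)]
  have hnotmem : ∀ g j, j ∉ f g → t g j = -|x j| := by
    intro g j h
    rcases hcases g j with h' | h'
    · exact absurd ((hmem g j).2 h') h
    · exact h'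
  -- injectivity of f
  have hinj : Function.Injective f := by
    intro g g' h
    funext j
    by_contra hne
    have hmem' : j ∈ f g ↔ j ∈ f g' := by rw [h]
    have hx0 : x j ≠ 0 := by
      intro h0; have := hx j; rw [h0] at this; simp at this; linarith
    have hflip : t g j = - t g' j := by
      simp only [ht]
      cases hgj : g j <;> cases hgj' : g' j <;> simp_all <;> ring
    by_cases hj : j ∈ f g
    · have h1 := (hmem g j).1 hj
      have h2 := (hmem g' j).1 (hmem'.1 hj)
      rw [h1, h2] at hflip
      have := hx j; linarith
    · have h1 := hnotmem g j hj
      have h2 := hnotmem g' j (fun hc => hj (hmem'.2 hc))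
      rw [h1, h2] at hflip
      have := hx j; linarith
  -- sums separated under strict inclusion
  set A : Finset (S → Bool) := univ.filter (fun g => (∑ j, t g j) ∈ Set.Icc a b) with hA
  have hanti : IsAntichain (· ⊆ ·) ((A.image f : Finset (Finset S)) : Set (Finset S)) := by
    rintro B1 hB1 B2 hB2 hne hsub
    simp only [coe_image, Set.mem_image, mem_coe, hA, mem_filter, mem_univ, true_and] at hB1 hB2
    obtain ⟨g, hg, rfl⟩ := hB1
    obtain ⟨g', hg', rfl⟩ := hB2
    obtain ⟨j0, hj0'⟩ := exists_of_ssubset (ssubset_of_subset_of_ne hsub hne)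
    obtain ⟨hj0in, hj0out⟩ := hj0'
    have hle : ∀ j ∈ univ, (0:ℝ) ≤ t g' j - t g j := by
      intro j _
      by_cases hj : j ∈ f g
      · have h1 := (hmem g j).1 hj
        have h2 := (hmem g' j).1 (hsub hj)
        rw [h1, h2]; linarith
      · have h1 := hnotmem g j hj
        rw [h1]
        rcases hcases g' j with h2 | h2 <;> rw [h2] <;> linarith [abs_nonneg (x j)]
    have hsingle : (2:ℝ) ≤ t g' j0 - t g j0 := by
      have h1 := hnotmem g j0 hj0out
      have h2 := (hmem g' j0).1 hj0in
      rw [h1, h2]; have := hx j0; linarith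
    have hsum : (2:ℝ) ≤ ∑ j, (t g' j - t g j) :=
      le_trans hsingle (Finset.single_le_sum hle (mem_univ j0))
    rw [Finset.sum_sub_distrib] at hsum
    obtain ⟨hga, hgb⟩ := hg
    obtain ⟨hga', hgb'⟩ := hg'
    linarith
  -- card bound
  have hcard1 : A.card ≤ n.choose (n / 2) := by
    rw [← Finset.card_image_of_injective A hinj]
    exact IsAntichain.sperner hanti
  -- put it together
  have hcard2 : (Fintype.card (S → Bool) : ℝ) = 2 ^ n := by
    rw [Fintype.card_fun, Fintype.card_bool]; push_cast; ring
  rw [hcard2]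
  have hch := choose_half n hn1
  have hsq2 : Real.sqrt ℓ ≤ Real.sqrt 2 * Real.sqrt n := by
    rw [← Real.sqrt_mul (by norm_num)]
    apply Real.sqrt_le_sqrt
    linarith
  have hsqn : (0:ℝ) < Real.sqrt n := Real.sqrt_pos.2 (by exact_mod_cast hn1)
  have hsqℓ : (0:ℝ) < Real.sqrt ℓ := Real.sqrt_pos.2 hℓ
  rw [div_le_div_iff₀ (by positivity) hsqℓ]
  calc (A.card : ℝ) * Real.sqrt ℓ
      ≤ (n.choose (n/2) : ℝ) * (Real.sqrt 2 * Real.sqrt n) := by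
        apply mul_le_mul (by exact_mod_cast hcard1) hsq2 (by positivity) (by positivity)
    _ = Real.sqrt 2 * ((n.choose (n/2) : ℝ) * Real.sqrt n) := by ring
    _ ≤ Real.sqrt 2 * 2^n := by
        apply mul_le_mul_of_nonneg_left hch (by positivity)
    _ ≤ 50 * 2^n := by
        apply mul_le_mul_of_nonneg_right _ (by positivity)
        nlinarith [Real.sq_sqrt (by norm_num : (2:ℝ) ≥ 0), Real.sqrt_nonneg 2]
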